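/- Let α be a finite type and let p be a probability mass function on Option α. Let ε be a real number with 0 ≤ ε ≤ 1/4. Suppose p(none) ≤ 2ε, and suppose the sum over all ordered pairs (a, b) of distinct elements of α of p(some a)·p(some b) is at most ε. Then there exists a ∈ α with p(some a) ≥ 1 - 4ε. -/

import Mathlib

/-- If a distribution on `Option α` puts mass at most `2ε` on `none` and the
probability that two independent samples are distinct non-`none` values is at
most `ε` (with `0 ≤ ε ≤ 1/4`), then some `some a` has mass at least `1 - 4ε`. -/
theorem exists_heavy_output {α : Type*} [Fintype α] [DecidableEq α]
    (p : PMF (Option α)) (ε : ℝ) (hε0 : 0 ≤ ε) (hε1 : ε ≤ 1 / 4)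
    (hnone : (p none).toReal ≤ 2 * ε)
    (hcol : ∑ x ∈ Finset.univ.filter (fun x : α × α => x.1 ≠ x.2),
        (p (some x.1)).toReal * (p (some x.2)).toReal ≤ ε) :
    ∃ a : α, 1 - 4 * ε ≤ (p (some a)).toReal := by
  set q : α → ℝ := fun a => (p (some a)).toReal with hq
  have hq0 : ∀ a, 0 ≤ q a := fun a => ENNReal.toReal_nonneg
  -- total mass
  have h1 : (∑ x : Option α, p x) = 1 := by
    rw [← tsum_fintype (L := SummationFilter.unconditional _)]; exact p.tsum_coe
  have h1r : (∑ x : Option α, (p x).toReal) = 1 := by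
    rw [← ENNReal.toReal_sum (fun a _ => p.apply_ne_top a), h1, ENNReal.toReal_one]
  rw [Fintype.sum_option] at h1r
  have hS : (1 : ℝ) - 2 * ε ≤ ∑ a, q a := by
    have : ∑ a, q a = 1 - (p none).toReal := by rw [← h1r]; ring
    rw [this]; linarith
  -- α is nonempty
  have hne : Nonempty α := by
    by_contra h
    rw [not_nonempty_iff] at h
    simp [Finset.univ_eq_empty] at h1r
    have h2 : (p none).toReal = 1 := by simpa using h1r
    rw [h2] at hnone; linarith
  -- sum over all pairs
  have hall : ∑ x : α × α, q x.1 * q x.2 = (∑ a, q a) * (∑ a, q a) := by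
    rw [Finset.sum_mul_sum, ← Finset.univ_product_univ, Finset.sum_product]
  have hsplit := Finset.sum_filter_add_sum_filter_not Finset.univ
    (fun x : α × α => x.1 ≠ x.2) (fun x => q x.1 * q x.2)
  have hdiag : ∑ x ∈ Finset.univ.filter (fun x : α × α => ¬ x.1 ≠ x.2),
      q x.1 * q x.2 = ∑ a, q a * q a := by
    have : Finset.univ.filter (fun x : α × α => ¬ x.1 ≠ x.2)
        = (Finset.univ : Finset α).diag := by
      ext x; simp [Finset.mem_diag, eq_comm]
    rw [this, Finset.sum_diag]
  -- max element
  obtain ⟨a, -, ha⟩ := Finset.exists_max_image (Finset.univ : Finset α) q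
    ⟨Classical.arbitrary α, Finset.mem_univ _⟩
  refine ⟨a, ?_⟩
  have hMsum : ∑ b, q b * q b ≤ (∑ b, q b) * q a := by
    rw [Finset.sum_mul]
    exact Finset.sum_le_sum fun b _ =>
      mul_le_mul_of_nonneg_left (ha b (Finset.mem_univ b)) (hq0 b)
  have hcol' : (∑ a, q a) * (∑ a, q a) - ∑ b, q b * q b ≤ ε := by
    rw [← hall]
    have := hsplit
    rw [hdiag] at this
    linarith [hcol, this]
  have hS2 : (∑ a, q a) * q a ≥ (∑ a, q a) * (∑ a, q a) - ε := by linarith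
  set S := ∑ a, q a
  have hSpos : (0:ℝ) < S := by linarith
  nlinarith [mul_nonneg hε0 (sub_nonneg.2 hε1), sq_nonneg (S - 1 + 2*ε),
    mul_le_mul_of_nonneg_left (ha a (Finset.mem_univ a)) hSpos.le]
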